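/- If sorted vectors x ⪰ y (majorization), and the decreasing indices i ≤ j, then the sorted versions of x + e_i and y + e_j satisfy x + e_i ⪰ y + e_j, where e_k is the k-th standard basis vector (adding 1 to the k-th largest entry). -/

import Mathlib

/-- `x` majorizes `y` (integer vectors). -/
def Majorizes {n : ℕ} (x y : Fin n → ℤ) : Prop :=
  (∀ s : Finset (Fin n), ∃ t : Finset (Fin n),
      t.card = s.card ∧ ∑ i ∈ s, y i ≤ ∑ i ∈ t, x i) ∧
  ∑ i, x i = ∑ i, y i


/-- top-`k` index set of `Fin n`. -/
def topSet (n k : ℕ) : Finset (Fin n) := Finset.univ.filter (fun m => (m : ℕ) < k)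

lemma mem_topSet {n k : ℕ} {m : Fin n} : m ∈ topSet n k ↔ (m : ℕ) < k := by
  simp [topSet]

lemma card_topSet {n k : ℕ} (hkn : k ≤ n) : (topSet n k).card = k := by
  have : topSet n k = (Finset.range k).attachFin
      (fun m hm => lt_of_lt_of_le (Finset.mem_range.mp hm) hkn) := by
    ext m; simp [topSet, Finset.mem_attachFin]
  rw [this, Finset.card_attachFin, Finset.card_range]

/-- For antitone `x`, sum over any set is at most the sum over the top set of same card. -/
lemma sum_le_topSet {n : ℕ} {x : Fin n → ℤ} (hx : Antitone x) (s : Finset (Fin n)) :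
    ∑ m ∈ s, x m ≤ ∑ m ∈ topSet n s.card, x m := by
  set k := s.card with hk
  have hkn : k ≤ n := by
    simpa using Finset.card_le_univ s
  set f := s.orderEmbOfFin hk.symm with hf
  have hsmap : s = Finset.univ.map f.toEmbedding := by
    ext m
    simp only [Finset.mem_map, Finset.mem_univ, true_and]
    constructor
    · intro hm
      have : m ∈ Set.range f := by
        rw [Finset.range_orderEmbOfFin]; exact hm
      obtain ⟨a, ha⟩ := this; exact ⟨a, ha⟩
    · rintro ⟨a, rfl⟩
      exact Finset.orderEmbOfFin_mem s hk.symm a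
  have htmap : topSet n k = Finset.univ.map (Fin.castLEEmb hkn) := by
    ext m
    simp only [mem_topSet, Finset.mem_map, Finset.mem_univ, true_and]
    constructor
    · intro hm; exact ⟨⟨m, hm⟩, rfl⟩
    · rintro ⟨a, rfl⟩; exact a.2
  rw [hsmap, htmap, Finset.sum_map, Finset.sum_map]
  apply Finset.sum_le_sum
  intro m _
  apply hx
  -- need castLE m ≤ f m, i.e. m.val ≤ (f m).val
  have key : ∀ p : ℕ, ∀ h : p < k, p ≤ ((f ⟨p, h⟩ : Fin n) : ℕ) := by
    intro p
    induction p with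
    | zero => intro h; exact Nat.zero_le _
    | succ q ih =>
      intro h
      have h1 : q < k := Nat.lt_of_succ_lt h
      have h2 := f.strictMono (show (⟨q, h1⟩ : Fin k) < ⟨q + 1, h⟩ by
        simp [Fin.lt_def])
      have h3 := ih h1
      have h4 : ((f ⟨q, h1⟩ : Fin n) : ℕ) < ((f ⟨q+1, h⟩ : Fin n) : ℕ) := h2
      omega
  have := key m.val m.2
  simpa [Fin.le_def] using this

lemma sum_add_single {n : ℕ} (x : Fin n → ℤ) (i : Fin n) (s : Finset (Fin n)) :
    ∑ m ∈ s, (x m + (Pi.single i 1 : Fin n → ℤ) m) = ∑ m ∈ s, x m + (if i ∈ s then 1 else 0) := by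
  simp [Finset.sum_add_distrib, Pi.single_apply, Finset.sum_ite_eq']

lemma topSet_succ {n k : ℕ} (hk : k < n) :
    topSet n (k + 1) = insert (⟨k, hk⟩ : Fin n) (topSet n k) := by
  ext m
  simp only [mem_topSet, Finset.mem_insert, Fin.ext_iff]
  omega

theorem majorizes_aux {n : ℕ} (x y : Fin n → ℤ)
    (hx_sorted : Antitone x) (hy_sorted : Antitone y)
    (hmaj : Majorizes x y) (i j : Fin n) (hij : i ≤ j) :
    Majorizes (x + Pi.single i 1) (y + Pi.single j 1) := by
  have hcard : ∀ s : Finset (Fin n), s.card ≤ n := fun s => by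
    simpa using Finset.card_le_univ s
  -- key consequence of majorization: any sum of y is at most the top sum of x of same card
  have hYX : ∀ s : Finset (Fin n), ∑ m ∈ s, y m ≤ ∑ m ∈ topSet n s.card, x m := by
    intro s
    obtain ⟨t, ht, hle⟩ := hmaj.1 s
    calc ∑ m ∈ s, y m ≤ ∑ m ∈ t, x m := hle
    _ ≤ ∑ m ∈ topSet n t.card, x m := sum_le_topSet hx_sorted t
    _ = ∑ m ∈ topSet n s.card, x m := by rw [ht]
  constructor
  · intro s
    set k := s.card with hk
    have hkn : k ≤ n := hcard s
    by_cases hjs : j ∈ s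
    · have hk1 : 1 ≤ k := Finset.card_pos.mpr ⟨j, hjs⟩
      by_cases hik : (i : ℕ) < k
      · -- take the top k set; it contains i
        refine ⟨topSet n k, card_topSet hkn, ?_⟩
        simp only [Pi.add_apply]
        rw [sum_add_single, sum_add_single, if_pos hjs, if_pos (mem_topSet.mpr hik)]
        have h0 := hYX s
        rw [← hk] at h0
        omega
      · -- i.val ≥ k, hence j.val ≥ k
        push_neg at hik
        have hjk : k ≤ (j : ℕ) := le_trans hik hij
        by_cases hcase : ∑ m ∈ s, y m + 1 ≤ ∑ m ∈ topSet n k, x m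
        · refine ⟨topSet n k, card_topSet hkn, ?_⟩
          simp only [Pi.add_apply]
          rw [sum_add_single, sum_add_single, if_pos hjs,
            if_neg (fun h => absurd (mem_topSet.mp h) (not_lt.mpr hik))]
          omega
        · push_neg at hcase
          have hiT : i ∉ topSet n (k - 1) := by
            rw [mem_topSet]; omega
          refine ⟨insert i (topSet n (k - 1)), ?_, ?_⟩
          · rw [Finset.card_insert_of_notMem hiT, card_topSet (by omega)]
            omega
          · simp only [Pi.add_apply]
            rw [sum_add_single, sum_add_single, if_pos hjs,
              if_pos (Finset.mem_insert_self i _),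
              Finset.sum_insert hiT]
            -- goal: ∑_s y + 1 ≤ x i + X_{k-1} + 1
            -- split ∑_s y = ∑_{s.erase j} y + y j
            have hsplit : ∑ m ∈ s, y m = y j + ∑ m ∈ s.erase j, y m :=
              (Finset.add_sum_erase s y hjs).symm
            have herase : ∑ m ∈ s.erase j, y m ≤ ∑ m ∈ topSet n (k - 1), y m := by
              have h1 := sum_le_topSet hy_sorted (s.erase j)
              rwa [Finset.card_erase_of_mem hjs, ← hk] at h1
            -- suffices: Y_{k-1} + y j ≤ X_{k-1} + x i
            by_contra hcon
            push_neg at hcon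
            have hcon2 : ∑ m ∈ topSet n (k-1), x m + x i <
                ∑ m ∈ topSet n (k-1), y m + y j := by omega
            -- partial sums at k-1
            have hYXk1 : ∑ m ∈ topSet n (k-1), y m ≤ ∑ m ∈ topSet n (k-1), x m := by
              have h1 := hYX (topSet n (k-1))
              rwa [card_topSet (show k - 1 ≤ n by omega)] at h1
            -- X_k = X_{k-1} + x ⟨k-1⟩
            have hk1n : k - 1 < n := by omega
            have hav : ((⟨k - 1, hk1n⟩ : Fin n) : ℕ) = k - 1 := rfl
            have hXk : ∑ m ∈ topSet n k, x m
                = x ⟨k-1, hk1n⟩ + ∑ m ∈ topSet n (k-1), x m := by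
              have : topSet n k = insert (⟨k-1, hk1n⟩ : Fin n) (topSet n (k-1)) := by
                have := topSet_succ hk1n
                rwa [show k - 1 + 1 = k by omega] at this
              rw [this, Finset.sum_insert (by rw [mem_topSet]; omega)]
            -- y j ≥ x ⟨k-1⟩
            have hcase2 : ∑ m ∈ topSet n k, x m ≤ ∑ m ∈ topSet n (k-1), y m + y j := by
              omega
            have hyjx : x ⟨k-1, hk1n⟩ ≤ y j := by omega
            -- the difference set
            set J := (j : ℕ) + 1 with hJ
            have hJn : J ≤ n := j.2
            have hsub : topSet n (k-1) ⊆ topSet n J := by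
              intro m hm; rw [mem_topSet] at *; omega
            set D := topSet n J \ topSet n (k-1) with hD
            have hmemD : ∀ m : Fin n, m ∈ D ↔ (k - 1 ≤ (m:ℕ) ∧ (m:ℕ) < J) := by
              intro m; simp only [hD, Finset.mem_sdiff, mem_topSet]; omega
            have hDnonneg : ∀ m ∈ D, (0 : ℤ) ≤ y m - x m := by
              intro m hm
              rw [hmemD] at hm
              have h1 : y j ≤ y m := hy_sorted (by rw [Fin.le_def]; omega)
              have h2 : x m ≤ x ⟨k-1, hk1n⟩ := hx_sorted (by rw [Fin.le_def]; omega)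
              omega
            have hiD : i ∈ D := by rw [hmemD]; omega
            have hsingle : y i - x i ≤ ∑ m ∈ D, (y m - x m) :=
              Finset.single_le_sum hDnonneg hiD
            have hyi : y j ≤ y i := hy_sorted hij
            -- partial sums at J
            have hYXJ : ∑ m ∈ topSet n J, y m ≤ ∑ m ∈ topSet n J, x m := by
              have h1 := hYX (topSet n J)
              rwa [card_topSet hJn] at h1
            have hsdx : ∑ m ∈ topSet n J, x m
                = ∑ m ∈ D, x m + ∑ m ∈ topSet n (k-1), x m := by
              rw [hD, Finset.sum_sdiff hsub]
            have hsdy : ∑ m ∈ topSet n J, y m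
                = ∑ m ∈ D, y m + ∑ m ∈ topSet n (k-1), y m := by
              rw [hD, Finset.sum_sdiff hsub]
            have hdiff : ∑ m ∈ D, (y m - x m) = ∑ m ∈ D, y m - ∑ m ∈ D, x m :=
              Finset.sum_sub_distrib _ _
            omega
    · -- j ∉ s
      refine ⟨topSet n k, card_topSet hkn, ?_⟩
      simp only [Pi.add_apply]
      rw [sum_add_single, sum_add_single, if_neg hjs]
      have h0 := hYX s
      rw [← hk] at h0
      split <;> omega
  · simp only [Pi.add_apply]
    rw [Finset.sum_add_distrib, Finset.sum_add_distrib, hmaj.2]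
    simp [Pi.single_apply]


/-- If sorted (decreasing) integer vectors satisfy `x ⪰ y` and `i ≤ j`, then
`x + e_i ⪰ y + e_j` (majorization is permutation-invariant, so this also covers the
re-sorted versions). -/
theorem majorizes_add_single {n : ℕ} (x y : Fin n → ℤ)
    (hx_sorted : Antitone x) (hy_sorted : Antitone y)
    (hmaj : Majorizes x y) (i j : Fin n) (hij : i ≤ j) :
    Majorizes (x + Pi.single i 1) (y + Pi.single j 1) :=
  majorizes_aux x y hx_sorted hy_sorted hmaj i j hij
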